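/- Let f and g be continuous probability densities on [0,1] that are positive on (0,1), and suppose t(x) := f(x)/g(x) is strictly convex on (0,1) with t(x) → ∞ as x → 0⁺ and as x → 1⁻. Then the set {x ∈ (0,1) : f(x) = g(x)} has exactly two elements. -/

import Mathlib

open Set intervalIntegral Filter

/-- If f and g are continuous probability densities on [0,1], positive on (0,1), whose ratio
f/g is strictly convex on (0,1) and tends to +∞ at both endpoints, then f = g at exactly
two points of (0,1). -/
theorem stmt_3 (f g : ℝ → ℝ)
    (hfc : ContinuousOn f (Set.Icc 0 1)) (hgc : ContinuousOn g (Set.Icc 0 1))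
    (hf1 : ∫ x in (0:ℝ)..1, f x = 1) (hg1 : ∫ x in (0:ℝ)..1, g x = 1)
    (hfpos : ∀ x ∈ Set.Ioo (0:ℝ) 1, 0 < f x)
    (hgpos : ∀ x ∈ Set.Ioo (0:ℝ) 1, 0 < g x)
    (hconv : StrictConvexOn ℝ (Set.Ioo (0:ℝ) 1) (fun x => f x / g x))
    (hlim0 : Filter.Tendsto (fun x => f x / g x) (nhdsWithin 0 (Set.Ioi 0)) Filter.atTop)
    (hlim1 : Filter.Tendsto (fun x => f x / g x) (nhdsWithin 1 (Set.Iio 1)) Filter.atTop) :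
    {x ∈ Set.Ioo (0:ℝ) 1 | f x = g x}.ncard = 2 := by
  have hgne : ∀ x ∈ Set.Ioo (0:ℝ) 1, g x ≠ 0 := fun x hx => (hgpos x hx).ne'
  -- Step A: there is a point where f < g.
  have hA : ∃ a ∈ Set.Ioo (0:ℝ) 1, f a < g a := by
    by_contra hno
    push_neg at hno
    -- so g ≤ f on (0,1)
    set h : ℝ → ℝ := fun x => f x - g x with hh
    have hhc : ContinuousOn h (Set.Icc 0 1) := hfc.sub hgc
    have hnonnegIoo : ∀ x ∈ Set.Ioo (0:ℝ) 1, 0 ≤ h x := fun x hx =>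
      sub_nonneg.2 (hno x hx)
    -- h 1 ≥ 0 by continuity
    have h1nonneg : 0 ≤ h 1 := by
      have htend : Filter.Tendsto h (nhdsWithin 1 (Set.Ioo (0:ℝ) 1)) (nhds (h 1)) :=
        ((hhc 1 (by norm_num)).mono Set.Ioo_subset_Icc_self)
      have hne : (nhdsWithin (1:ℝ) (Set.Ioo (0:ℝ) 1)).NeBot := by
        rw [nhdsWithin_Ioo_eq_nhdsLT zero_lt_one]
        infer_instance
      exact ge_of_tendsto htend
        ((eventually_mem_nhdsWithin).mono fun x hx => hnonnegIoo x hx)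
    -- find a small interval (0, δ) on which f/g ≥ 2
    have hev : {x : ℝ | 2 ≤ f x / g x} ∩ Set.Ioo 0 1 ∈ nhdsWithin (0:ℝ) (Set.Ioi 0) := by
      refine Filter.inter_mem (hlim0.eventually_ge_atTop 2) ?_
      refine Filter.inter_mem eventually_mem_nhdsWithin ?_
      exact nhdsWithin_le_nhds (Iio_mem_nhds one_pos)
    obtain ⟨δ, hδ0, hδsub⟩ := mem_nhdsGT_iff_exists_Ioo_subset.1 hev
    -- points of Ioo 0 δ' where δ' = min δ 1: use δ' to stay inside (0,1]
    set δ' : ℝ := min δ 1 with hδ'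
    have hδ'0 : 0 < δ' := lt_min hδ0 one_pos
    have hδ'1 : δ' ≤ 1 := min_le_right _ _
    have hsub2 : Set.Ioo (0:ℝ) δ' ⊆ Set.Ioo 0 δ := fun x hx =>
      ⟨hx.1, lt_of_lt_of_le hx.2 (min_le_left _ _)⟩
    have hposIoo : ∀ x ∈ Set.Ioo (0:ℝ) δ', 0 < h x := by
      intro x hx
      have hx' := hδsub (hsub2 hx)
      have hg := hgpos x hx'.2
      have h2 : 2 * g x ≤ f x := (le_div_iff₀ hg).1 hx'.1
      have : g x < f x := lt_of_lt_of_le (by linarith) h2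
      simpa [hh] using sub_pos.2 this
    -- integrability
    have hI1 : Set.uIcc (0:ℝ) δ' ⊆ Set.Icc 0 1 := by
      rw [Set.uIcc_of_le hδ'0.le]
      exact Set.Icc_subset_Icc le_rfl hδ'1
    have hI2 : Set.uIcc δ' (1:ℝ) ⊆ Set.Icc 0 1 := by
      rw [Set.uIcc_of_le hδ'1]
      exact Set.Icc_subset_Icc hδ'0.le le_rfl
    have hint1 : IntervalIntegrable h MeasureTheory.volume 0 δ' :=
      (hhc.mono hI1).intervalIntegrable
    have hint2 : IntervalIntegrable h MeasureTheory.volume δ' 1 :=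
      (hhc.mono hI2).intervalIntegrable
    have hpos1 : 0 < ∫ x in (0:ℝ)..δ', h x :=
      intervalIntegral_pos_of_pos_on hint1 hposIoo hδ'0
    have hpos2 : 0 ≤ ∫ x in δ'..(1:ℝ), h x := by
      refine intervalIntegral.integral_nonneg hδ'1 ?_
      intro x hx
      rcases eq_or_lt_of_le hx.2 with h1 | h1
      · rw [h1]; exact h1nonneg
      · exact hnonnegIoo x ⟨lt_of_lt_of_le hδ'0 hx.1, h1⟩
    have hsum : (∫ x in (0:ℝ)..δ', h x) + ∫ x in δ'..(1:ℝ), h x = ∫ x in (0:ℝ)..1, h x :=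
      intervalIntegral.integral_add_adjacent_intervals hint1 hint2
    have hfint : IntervalIntegrable f MeasureTheory.volume 0 1 :=
      (hfc.mono (by rw [Set.uIcc_of_le zero_le_one])).intervalIntegrable
    have hgint : IntervalIntegrable g MeasureTheory.volume 0 1 :=
      (hgc.mono (by rw [Set.uIcc_of_le zero_le_one])).intervalIntegrable
    have hzero : (∫ x in (0:ℝ)..1, h x) = 0 := by
      have := intervalIntegral.integral_sub hfint hgint
      simp only [hh]
      rw [this, hf1, hg1, sub_self]
    linarith
  obtain ⟨a, haI, ha⟩ := hA
  have hta : f a / g a < 1 := (div_lt_one (hgpos a haI)).2 ha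
  -- Step B: points near 0 and 1 where f/g > 1
  have hB0 : ∃ u ∈ Set.Ioo (0:ℝ) a, 1 < f u / g u := by
    have hev : ∀ᶠ x in nhdsWithin (0:ℝ) (Set.Ioi 0), 1 < f x / g x ∧ x ∈ Set.Ioo (0:ℝ) a := by
      refine (hlim0.eventually_gt_atTop 1).and ?_
      refine (eventually_mem_nhdsWithin).and ?_ |>.mono fun x hx => ⟨hx.1, hx.2⟩
      exact nhdsWithin_le_nhds (Iio_mem_nhds haI.1)
    obtain ⟨u, hu1, hu2⟩ := hev.exists
    exact ⟨u, hu2, hu1⟩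
  have hB1 : ∃ v ∈ Set.Ioo a (1:ℝ), 1 < f v / g v := by
    have hev : ∀ᶠ x in nhdsWithin (1:ℝ) (Set.Iio 1), 1 < f x / g x ∧ x ∈ Set.Ioo a 1 := by
      have hgt : ∀ᶠ x in nhdsWithin (1:ℝ) (Set.Iio 1), a < x :=
        nhdsWithin_le_nhds (Ioi_mem_nhds haI.2)
      exact (hlim1.eventually_gt_atTop 1).and (hgt.and eventually_mem_nhdsWithin)
    obtain ⟨v, hv1, hv2, hv3⟩ := hev.exists
    exact ⟨v, ⟨hv2, hv3⟩, hv1⟩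
  obtain ⟨u, huI, hu⟩ := hB0
  obtain ⟨v, hvI, hv⟩ := hB1
  have huIoo : Set.Icc u a ⊆ Set.Ioo (0:ℝ) 1 := fun x hx =>
    ⟨lt_of_lt_of_le huI.1 hx.1, lt_of_le_of_lt hx.2 haI.2⟩
  have hvIoo : Set.Icc a v ⊆ Set.Ioo (0:ℝ) 1 := fun x hx =>
    ⟨lt_of_lt_of_le haI.1 hx.1, lt_of_le_of_lt hx.2 hvI.2⟩
  have htc : ContinuousOn (fun x => f x / g x) (Set.Ioo (0:ℝ) 1) :=
    ((hfc.mono Set.Ioo_subset_Icc_self).div (hgc.mono Set.Ioo_subset_Icc_self)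
      fun x hx => hgne x hx)
  -- Step C: IVT gives two roots
  have hivt1 : ∃ x₁ ∈ Set.Icc u a, f x₁ / g x₁ = 1 := by
    have := intermediate_value_Icc' huI.2.le (htc.mono huIoo)
    obtain ⟨x₁, hx₁, hx₁'⟩ := this ⟨hta.le, hu.le⟩
    exact ⟨x₁, hx₁, hx₁'⟩
  have hivt2 : ∃ x₂ ∈ Set.Icc a v, f x₂ / g x₂ = 1 := by
    have := intermediate_value_Icc hvI.1.le (htc.mono hvIoo)
    obtain ⟨x₂, hx₂, hx₂'⟩ := this ⟨hta.le, hv.le⟩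
    exact ⟨x₂, hx₂, hx₂'⟩
  obtain ⟨x₁, hx₁m, hx₁⟩ := hivt1
  obtain ⟨x₂, hx₂m, hx₂⟩ := hivt2
  have hx₁I : x₁ ∈ Set.Ioo (0:ℝ) 1 := huIoo hx₁m
  have hx₂I : x₂ ∈ Set.Ioo (0:ℝ) 1 := hvIoo hx₂m
  have hx₁a : x₁ < a := lt_of_le_of_ne hx₁m.2 (by rintro rfl; exact absurd hx₁ hta.ne)
  have hax₂ : a ≤ x₂ := hx₂m.1
  have hlt : x₁ < x₂ := lt_of_lt_of_le hx₁a hax₂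
  -- At most two roots: a strictly convex function takes each value at most twice
  have htriple : ∀ x y z : ℝ, x ∈ Set.Ioo (0:ℝ) 1 → z ∈ Set.Ioo (0:ℝ) 1 →
      f x / g x = 1 → f y / g y = 1 → f z / g z = 1 → x < y → y < z → False := by
    intro x y z hxI hzI htx hty htz hxy hyz
    have hxz : x ≠ z := ne_of_lt (hxy.trans hyz)
    have hzx : (0:ℝ) < z - x := by linarith
    have hApos : 0 < (z - y) / (z - x) := div_pos (by linarith) hzx
    have hBpos : 0 < (y - x) / (z - x) := div_pos (by linarith) hzx
    have hAB : (z - y) / (z - x) + (y - x) / (z - x) = 1 := by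
      rw [← add_div, div_eq_one_iff_eq hzx.ne']; ring
    have hkey := hconv.2 hxI hzI hxz hApos hBpos hAB
    have hcomb : ((z - y) / (z - x)) • x + ((y - x) / (z - x)) • z = y := by
      rw [smul_eq_mul, smul_eq_mul, div_mul_eq_mul_div, div_mul_eq_mul_div,
        ← add_div, div_eq_iff hzx.ne']
      ring
    rw [hcomb] at hkey
    simp only [smul_eq_mul, htx, hty, htz, mul_one] at hkey
    linarith
  -- the set equals {x₁, x₂}
  have hset : {x ∈ Set.Ioo (0:ℝ) 1 | f x = g x} = {x₁, x₂} := by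
    ext w
    simp only [Set.mem_setOf_eq, Set.mem_insert_iff, Set.mem_singleton_iff]
    constructor
    · rintro ⟨hwI, hw⟩
      have htw : f w / g w = 1 := by
        rw [hw]; exact div_self (hgne w hwI)
      by_contra hcon
      push_neg at hcon
      obtain ⟨hw1, hw2⟩ := hcon
      rcases lt_trichotomy w x₁ with h | h | h
      · exact htriple w x₁ x₂ hwI hx₂I htw hx₁ hx₂ h hlt
      · exact hw1 h
      · rcases lt_trichotomy w x₂ with h' | h' | h'
        · exact htriple x₁ w x₂ hx₁I hx₂I hx₁ htw hx₂ h h'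
        · exact hw2 h'
        · exact htriple x₁ x₂ w hx₁I hwI hx₁ hx₂ htw hlt h'
    · rintro (rfl | rfl)
      · exact ⟨hx₁I, (div_eq_one_iff_eq (hgne w hx₁I)).1 hx₁⟩
      · exact ⟨hx₂I, (div_eq_one_iff_eq (hgne w hx₂I)).1 hx₂⟩
  rw [hset]
  exact Set.ncard_pair (ne_of_lt hlt)
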